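/- Let a and b be unit vectors in E and let R > 0. Then the Lebesgue volume of the set {x ∈ E : ‖x‖ < R and ⟨x, a⟩ · ⟨x, b⟩ < 0} equals (4/3) · arccos⟨a, b⟩ · R³. In particular this set occupies a fraction θ/π of the ball of radius R, where θ = arccos⟨a, b⟩. (This supports the generalization to viewpoints at finite distance — Theorem 2: when the viewpoint is chosen uniformly at random in a ball centered on the edge's supporting line, the probability that an edge with adjacent face normals a and b is on the transparent silhouette is θ_e/π = O(θ_e).) -/

import Mathlib

open MeasureTheory Real RealInnerProductSpace

open Set

open MeasureTheory Real Set

lemma angle_iff (θ : ℝ) (hθ0 : 0 < θ) (hθ : θ ≤ π / 2) (φ : ℝ) (hφ : φ ∈ Ioo (-π) π) :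
    Real.cos φ * Real.cos (φ - θ) < 0 ↔
      φ ∈ Ioo (-(π/2)) (-(π/2) + θ) ∪ Ioo (π/2) (π/2 + θ) := by
  obtain ⟨h1, h2⟩ := hφ
  have hπ := Real.pi_pos
  constructor
  · intro h
    by_contra hn
    simp only [mem_union, mem_Ioo, not_or, not_and_or, not_lt] at hn
    obtain ⟨ha, hb⟩ := hn
    rcases ha with ha | ha
    · rcases hb with hb | hb
      · -- φ ≤ -π/2 (and φ ≤ π/2): both cos nonpos
        have c1 : Real.cos φ ≤ 0 := by
          rw [← Real.cos_neg]
          exact Real.cos_nonpos_of_pi_div_two_le_of_le (by linarith) (by linarith)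
        have c2 : Real.cos (φ - θ) ≤ 0 := by
          rw [← Real.cos_neg, neg_sub]
          exact Real.cos_nonpos_of_pi_div_two_le_of_le (by linarith) (by linarith)
        nlinarith
      · linarith
    · rcases hb with hb | hb
      · -- -π/2 + θ ≤ φ ≤ π/2 : both cos nonneg
        have c1 : 0 ≤ Real.cos φ :=
          Real.cos_nonneg_of_mem_Icc ⟨by linarith, by linarith⟩
        have c2 : 0 ≤ Real.cos (φ - θ) :=
          Real.cos_nonneg_of_mem_Icc ⟨by linarith, by linarith⟩
        nlinarith
      · -- π/2 + θ ≤ φ : both cos nonpos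
        have c1 : Real.cos φ ≤ 0 :=
          Real.cos_nonpos_of_pi_div_two_le_of_le (by linarith) (by linarith)
        have c2 : Real.cos (φ - θ) ≤ 0 :=
          Real.cos_nonpos_of_pi_div_two_le_of_le (by linarith) (by linarith)
        nlinarith
  · rintro (⟨h3, h4⟩ | ⟨h3, h4⟩)
    · have c1 : 0 < Real.cos φ :=
        Real.cos_pos_of_mem_Ioo ⟨by linarith, by linarith⟩
      have c2 : Real.cos (φ - θ) < 0 := by
        rw [← Real.cos_neg, neg_sub]
        exact Real.cos_neg_of_pi_div_two_lt_of_lt (by linarith) (by linarith)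
      nlinarith
    · have c1 : Real.cos φ < 0 :=
        Real.cos_neg_of_pi_div_two_lt_of_lt (by linarith) (by linarith)
      have c2 : 0 < Real.cos (φ - θ) :=
        Real.cos_pos_of_mem_Ioo ⟨by linarith, by linarith⟩
      nlinarith
open MeasureTheory Real Set

lemma null_lines (c s : ℝ) (hs : s ≠ 0) :
    volume {p : ℝ × ℝ | p.1 * (c * p.1 + s * p.2) = 0} = 0 := by
  have h1 : volume {p : ℝ × ℝ | p.1 = 0} = 0 := by
    have : {p : ℝ × ℝ | p.1 = 0} = (LinearMap.ker (LinearMap.fst ℝ ℝ ℝ) : Set (ℝ × ℝ)) := by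
      ext p; simp [LinearMap.mem_ker]
    rw [this]
    apply Measure.addHaar_submodule
    rw [Ne, LinearMap.ker_eq_top]
    intro h
    have : (LinearMap.fst ℝ ℝ ℝ) (1, 0) = (0 : ℝ × ℝ →ₗ[ℝ] ℝ) (1, 0) := by rw [h]
    simp at this
  have h2 : volume {p : ℝ × ℝ | c * p.1 + s * p.2 = 0} = 0 := by
    set L : ℝ × ℝ →ₗ[ℝ] ℝ := c • LinearMap.fst ℝ ℝ ℝ + s • LinearMap.snd ℝ ℝ ℝ with hL
    have : {p : ℝ × ℝ | c * p.1 + s * p.2 = 0} = (LinearMap.ker L : Set (ℝ × ℝ)) := by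
      ext p; simp [LinearMap.mem_ker, hL, smul_eq_mul]
    rw [this]
    apply Measure.addHaar_submodule
    rw [Ne, LinearMap.ker_eq_top]
    intro h
    have : L (0, 1) = (0 : ℝ × ℝ →ₗ[ℝ] ℝ) (0, 1) := by rw [h]
    simp [hL, hs] at this
  refine measure_mono_null (fun p hp => ?_) (measure_union_null h1 h2)
  simp only [mem_setOf_eq] at hp
  rcases mul_eq_zero.1 hp with h | h
  · exact Or.inl h
  · exact Or.inr h
open MeasureTheory Real Set

lemma sector_base (θ r : ℝ) (hθ0 : 0 < θ) (hθ : θ ≤ π / 2) (hr : 0 < r) :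
    volume {p : ℝ × ℝ | p.1 ^ 2 + p.2 ^ 2 < r ^ 2 ∧
        p.1 * (Real.cos θ * p.1 + Real.sin θ * p.2) < 0}
      = ENNReal.ofReal (θ * r ^ 2) := by
  have hπ := Real.pi_pos
  set A : Set ℝ := Ioo (-(π/2)) (-(π/2) + θ) ∪ Ioo (π/2) (π/2 + θ) with hA
  set W : Set (ℝ × ℝ) := Ioo 0 r ×ˢ A with hW
  set S : Set (ℝ × ℝ) := {p : ℝ × ℝ | p.1 ^ 2 + p.2 ^ 2 < r ^ 2 ∧
      p.1 * (Real.cos θ * p.1 + Real.sin θ * p.2) < 0} with hS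
  have hWtarget : W ⊆ polarCoord.target := by
    rintro ⟨r', φ⟩ ⟨hr', hφ⟩
    have hφ' : φ ∈ Ioo (-π) π := by
      rcases hφ with h | h <;>
        (simp only [mem_Ioo] at h ⊢; constructor <;> linarith [h.1, h.2])
    exact ⟨hr'.1, hφ'⟩
  -- key pointwise identity
  have key : ∀ r' φ : ℝ, (r' * Real.cos φ) * (Real.cos θ * (r' * Real.cos φ)
        + Real.sin θ * (r' * Real.sin φ)) = r' ^ 2 * (Real.cos φ * Real.cos (φ - θ)) := by
    intro r' φ
    rw [Real.cos_sub]
    ring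
  have himg : polarCoord.symm '' W = S ∩ polarCoord.source := by
    ext x
    constructor
    · rintro ⟨⟨r', φ⟩, hp, rfl⟩
      have hpt := hWtarget hp
      obtain ⟨hr', hφ⟩ := hp
      have hφA : Real.cos φ * Real.cos (φ - θ) < 0 :=
        (angle_iff θ hθ0 hθ φ hpt.2).2 hφ
      have hr'0 : 0 < r' := hr'.1
      refine ⟨⟨?_, ?_⟩, polarCoord.map_target hpt⟩
      · simp only [polarCoord_symm_apply]
        have : (r' * Real.cos φ) ^ 2 + (r' * Real.sin φ) ^ 2 = r' ^ 2 := by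
          have := Real.sin_sq_add_cos_sq φ; nlinarith
        rw [this]
        have := hr'.2
        nlinarith
      · simp only [polarCoord_symm_apply]
        rw [key]
        exact mul_neg_of_pos_of_neg (by positivity) hφA
    · rintro ⟨hxS, hxsrc⟩
      refine ⟨polarCoord x, ?_, polarCoord.left_inv hxsrc⟩
      have hpt : polarCoord x ∈ polarCoord.target := polarCoord.map_source hxsrc
      set p := polarCoord x with hp
      have hx : polarCoord.symm p = x := polarCoord.left_inv hxsrc
      obtain ⟨h1, h2⟩ := hxS
      rw [← hx] at h1 h2
      simp only [polarCoord_symm_apply] at h1 h2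
      rw [key] at h2
      have hr'0 : 0 < p.1 := hpt.1
      have hrad : (p.1 * Real.cos p.2) ^ 2 + (p.1 * Real.sin p.2) ^ 2 = p.1 ^ 2 := by
        have := Real.sin_sq_add_cos_sq p.2; nlinarith
      rw [hrad] at h1
      have hcc : Real.cos p.2 * Real.cos (p.2 - θ) < 0 := by
        by_contra hcon
        push_neg at hcon
        nlinarith
      exact ⟨⟨hr'0, by nlinarith⟩, (angle_iff θ hθ0 hθ p.2 hpt.2).1 hcc⟩
  have hWm : MeasurableSet W :=
    (measurableSet_Ioo.prod ((measurableSet_Ioo.union measurableSet_Ioo)))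
  -- volume S = volume (image)
  have hvolS : volume S = volume (polarCoord.symm '' W) := by
    rw [himg]
    rw [← Set.diff_compl]
    refine (measure_diff_null ?_).symm
    have := polarCoord_source_ae_eq_univ
    rw [ae_eq_univ] at this
    exact this
  have hdet : volume (polarCoord.symm '' W) = ∫⁻ p in W, ENNReal.ofReal p.1 := by
    set B : ℝ × ℝ → ℝ × ℝ →L[ℝ] ℝ × ℝ := fun p =>
      LinearMap.toContinuousLinearMap (Matrix.toLin (Module.Basis.finTwoProd ℝ) (Module.Basis.finTwoProd ℝ)
        !![Real.cos p.2, -p.1 * Real.sin p.2; Real.sin p.2, p.1 * Real.cos p.2]) with hB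
    have hder : ∀ p ∈ W, HasFDerivWithinAt polarCoord.symm (B p) W p := fun p _ =>
      (hasFDerivAt_polarCoord_symm p).hasFDerivWithinAt
    have hinj : Set.InjOn polarCoord.symm W := by
      have := polarCoord.symm.injOn
      rw [OpenPartialHomeomorph.symm_source] at this
      exact this.mono hWtarget
    have B_det : ∀ p, (B p).det = p.1 := by
      intro p
      conv_rhs => rw [← one_mul p.1, ← Real.cos_sq_add_sin_sq p.2]
      simp only [hB, neg_mul, LinearMap.det_toContinuousLinearMap, LinearMap.det_toLin,
        Matrix.det_fin_two_of, sub_neg_eq_add]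
      ring
    rw [← lintegral_abs_det_fderiv_eq_addHaar_image volume hWm hder hinj]
    refine setLIntegral_congr_fun hWm (fun p hp => ?_)
    rw [B_det, abs_of_pos hp.1.1]
  have hIoo : ∫⁻ x in Ioo (0:ℝ) r, ENNReal.ofReal x = ENNReal.ofReal (r ^ 2 / 2) := by
    have hint : IntegrableOn (fun x : ℝ => x) (Ioo 0 r) volume :=
      (intervalIntegrable_iff_integrableOn_Ioo_of_le hr.le).1
        (intervalIntegral.intervalIntegrable_id (μ := volume) (a := 0) (b := r))
    have hnn : 0 ≤ᵐ[volume.restrict (Ioo (0:ℝ) r)] fun x : ℝ => x :=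
      (ae_restrict_iff' measurableSet_Ioo).2 (ae_of_all _ fun x hx => hx.1.le)
    rw [← ofReal_integral_eq_lintegral_ofReal hint hnn]
    congr 1
    rw [← MeasureTheory.integral_Ioc_eq_integral_Ioo,
      ← intervalIntegral.integral_of_le hr.le, integral_id]
    ring
  have hAvol : volume A = ENNReal.ofReal (2 * θ) := by
    rw [hA, measure_union ?_ measurableSet_Ioo, Real.volume_Ioo, Real.volume_Ioo,
      ← ENNReal.ofReal_add (by linarith) (by linarith)]
    · congr 1; ring
    · rw [Set.disjoint_left]
      rintro x ⟨_, hx2⟩ ⟨hx3, _⟩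
      linarith
  have hprod : ∫⁻ p in W, ENNReal.ofReal p.1
      = (∫⁻ x in Ioo (0:ℝ) r, ENNReal.ofReal x) * volume A := by
    rw [hW, MeasureTheory.Measure.volume_eq_prod, ← Measure.prod_restrict]
    have heq : ∫⁻ p : ℝ × ℝ, ENNReal.ofReal p.1
          ∂((volume.restrict (Ioo (0:ℝ) r)).prod (volume.restrict A))
        = ∫⁻ p : ℝ × ℝ, ENNReal.ofReal p.1 * (fun _ : ℝ => (1 : ENNReal)) p.2
          ∂((volume.restrict (Ioo (0:ℝ) r)).prod (volume.restrict A)) := by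
      apply lintegral_congr; intro p; simp
    rw [heq, lintegral_prod_mul (f := fun x : ℝ => ENNReal.ofReal x)
      (g := fun _ : ℝ => (1 : ENNReal)) ENNReal.measurable_ofReal.aemeasurable
      measurable_const.aemeasurable, lintegral_one, Measure.restrict_apply_univ]
  rw [hvolS, hdet, hprod, hIoo, hAvol, ← ENNReal.ofReal_mul (by positivity)]
  congr 1
  ring
open MeasureTheory Real Set

lemma isOpen_sector (c s r : ℝ) :
    IsOpen {p : ℝ × ℝ | p.1 ^ 2 + p.2 ^ 2 < r ^ 2 ∧ p.1 * (c * p.1 + s * p.2) < 0} := by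
  have h1 : IsOpen {p : ℝ × ℝ | p.1 ^ 2 + p.2 ^ 2 < r ^ 2} :=
    isOpen_lt (by fun_prop) continuous_const
  have h2 : IsOpen {p : ℝ × ℝ | p.1 * (c * p.1 + s * p.2) < 0} :=
    isOpen_lt (by fun_prop) continuous_const
  exact h1.inter h2

lemma flip_vol (c s r : ℝ) :
    volume {p : ℝ × ℝ | p.1 ^ 2 + p.2 ^ 2 < r ^ 2 ∧ 0 < p.1 * (c * p.1 + s * p.2)}
      = volume {p : ℝ × ℝ | p.1 ^ 2 + p.2 ^ 2 < r ^ 2 ∧ p.1 * (-c * p.1 + s * p.2) < 0} := by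
  have hmp : MeasurePreserving (fun p : ℝ × ℝ => (p.1, -p.2)) volume volume := by
    have := (MeasurePreserving.id (volume : Measure ℝ)).prod
      (Measure.measurePreserving_neg (volume : Measure ℝ))
    exact this
  have hpre : {p : ℝ × ℝ | p.1 ^ 2 + p.2 ^ 2 < r ^ 2 ∧ 0 < p.1 * (c * p.1 + s * p.2)}
      = (fun p : ℝ × ℝ => (p.1, -p.2)) ⁻¹'
        {p : ℝ × ℝ | p.1 ^ 2 + p.2 ^ 2 < r ^ 2 ∧ p.1 * (-c * p.1 + s * p.2) < 0} := by
    ext p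
    simp only [mem_setOf_eq, mem_preimage]
    constructor
    · rintro ⟨h1, h2⟩; exact ⟨by nlinarith, by nlinarith⟩
    · rintro ⟨h1, h2⟩; exact ⟨by nlinarith, by nlinarith⟩
  rw [hpre]
  exact hmp.measure_preimage (isOpen_sector (-c) s r).measurableSet.nullMeasurableSet

lemma isOpen_sector' (c s r : ℝ) :
    IsOpen {p : ℝ × ℝ | p.1 ^ 2 + p.2 ^ 2 < r ^ 2 ∧ 0 < p.1 * (c * p.1 + s * p.2)} := by
  have h1 : IsOpen {p : ℝ × ℝ | p.1 ^ 2 + p.2 ^ 2 < r ^ 2} :=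
    isOpen_lt (by fun_prop) continuous_const
  have h2 : IsOpen {p : ℝ × ℝ | 0 < p.1 * (c * p.1 + s * p.2)} :=
    isOpen_lt continuous_const (by fun_prop)
  exact h1.inter h2

lemma split_vol (c s r : ℝ) (hs : s ≠ 0) :
    volume {p : ℝ × ℝ | p.1 ^ 2 + p.2 ^ 2 < r ^ 2 ∧ p.1 * (c * p.1 + s * p.2) < 0}
      + volume {p : ℝ × ℝ | p.1 ^ 2 + p.2 ^ 2 < r ^ 2 ∧ 0 < p.1 * (c * p.1 + s * p.2)}
      = volume {p : ℝ × ℝ | p.1 ^ 2 + p.2 ^ 2 < r ^ 2} := by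
  have hD : {p : ℝ × ℝ | p.1 ^ 2 + p.2 ^ 2 < r ^ 2}
      = ({p : ℝ × ℝ | p.1 ^ 2 + p.2 ^ 2 < r ^ 2 ∧ p.1 * (c * p.1 + s * p.2) < 0}
        ∪ {p : ℝ × ℝ | p.1 ^ 2 + p.2 ^ 2 < r ^ 2 ∧ 0 < p.1 * (c * p.1 + s * p.2)})
        ∪ ({p : ℝ × ℝ | p.1 ^ 2 + p.2 ^ 2 < r ^ 2}
          ∩ {p : ℝ × ℝ | p.1 * (c * p.1 + s * p.2) = 0}) := by
    ext p
    simp only [mem_union, mem_setOf_eq, mem_inter_iff]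
    constructor
    · intro h
      rcases lt_trichotomy (p.1 * (c * p.1 + s * p.2)) 0 with h' | h' | h'
      · exact Or.inl (Or.inl ⟨h, h'⟩)
      · exact Or.inr ⟨h, h'⟩
      · exact Or.inl (Or.inr ⟨h, h'⟩)
    · rintro ((⟨h, _⟩ | ⟨h, _⟩) | ⟨h, _⟩) <;> exact h
  have hdisj : Disjoint {p : ℝ × ℝ | p.1 ^ 2 + p.2 ^ 2 < r ^ 2 ∧ p.1 * (c * p.1 + s * p.2) < 0}
      {p : ℝ × ℝ | p.1 ^ 2 + p.2 ^ 2 < r ^ 2 ∧ 0 < p.1 * (c * p.1 + s * p.2)} := by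
    rw [Set.disjoint_left]
    rintro p ⟨_, h1⟩ ⟨_, h2⟩
    exact absurd (h1.trans h2) (lt_irrefl _)
  have hCnull : volume ({p : ℝ × ℝ | p.1 ^ 2 + p.2 ^ 2 < r ^ 2}
      ∩ {p : ℝ × ℝ | p.1 * (c * p.1 + s * p.2) = 0}) = 0 :=
    measure_mono_null inter_subset_right (null_lines c s hs)
  conv_rhs => rw [hD]
  rw [le_antisymm ((measure_union_le _ _).trans (by rw [hCnull, add_zero]))
      (measure_mono subset_union_left),
    measure_union hdisj (isOpen_sector' c s r).measurableSet]

lemma disk_vol (r : ℝ) (hr : 0 < r) :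
    volume {p : ℝ × ℝ | p.1 ^ 2 + p.2 ^ 2 < r ^ 2} = ENNReal.ofReal (π * r ^ 2) := by
  have hπ := Real.pi_pos
  have h1 : volume {p : ℝ × ℝ | p.1 ^ 2 + p.2 ^ 2 < r ^ 2 ∧ p.1 * ((0:ℝ) * p.1 + 1 * p.2) < 0}
      = ENNReal.ofReal (π / 2 * r ^ 2) := by
    have := sector_base (π / 2) r (by linarith) le_rfl hr
    rwa [Real.cos_pi_div_two, Real.sin_pi_div_two] at this
  have h2 : volume {p : ℝ × ℝ | p.1 ^ 2 + p.2 ^ 2 < r ^ 2 ∧ 0 < p.1 * ((0:ℝ) * p.1 + 1 * p.2)}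
      = ENNReal.ofReal (π / 2 * r ^ 2) := by
    rw [flip_vol, neg_zero]
    exact h1
  rw [← split_vol 0 1 r one_ne_zero, h1, h2,
    ← ENNReal.ofReal_add (by positivity) (by positivity)]
  congr 1
  ring

lemma sector_area (θ : ℝ) (hθ0 : 0 < θ) (hθπ : θ < π) (w : ℝ) :
    volume {p : ℝ × ℝ | p.1 ^ 2 + p.2 ^ 2 < w ∧
        p.1 * (Real.cos θ * p.1 + Real.sin θ * p.2) < 0}
      = ENNReal.ofReal (θ * w) := by
  rcases le_or_gt w 0 with hw | hw
  · have he : {p : ℝ × ℝ | p.1 ^ 2 + p.2 ^ 2 < w ∧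
        p.1 * (Real.cos θ * p.1 + Real.sin θ * p.2) < 0} = ∅ := by
      ext p
      simp only [mem_setOf_eq, mem_empty_iff_false, iff_false, not_and]
      intro h
      nlinarith
    rw [he, measure_empty, Eq.comm, ENNReal.ofReal_eq_zero]
    exact mul_nonpos_of_nonneg_of_nonpos hθ0.le hw
  · set r : ℝ := Real.sqrt w with hrdef
    have hr : 0 < r := Real.sqrt_pos.2 hw
    have hr2 : r ^ 2 = w := Real.sq_sqrt hw.le
    rw [← hr2]
    rcases le_or_gt θ (π / 2) with hhalf | hhalf
    · exact sector_base θ r hθ0 hhalf hr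
    · have hs : Real.sin θ ≠ 0 := (Real.sin_pos_of_pos_of_lt_pi hθ0 hθπ).ne'
      have hflip : volume {p : ℝ × ℝ | p.1 ^ 2 + p.2 ^ 2 < r ^ 2 ∧
            0 < p.1 * (Real.cos θ * p.1 + Real.sin θ * p.2)}
          = ENNReal.ofReal ((π - θ) * r ^ 2) := by
        rw [flip_vol]
        have hc : -Real.cos θ = Real.cos (π - θ) := (Real.cos_pi_sub θ).symm
        have hsin : Real.sin θ = Real.sin (π - θ) := (Real.sin_pi_sub θ).symm
        rw [hc, hsin]
        exact sector_base (π - θ) r (by linarith) (by linarith) hr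
      have hsplit := split_vol (Real.cos θ) (Real.sin θ) r hs
      rw [hflip, disk_vol r hr] at hsplit
      have hsum : ENNReal.ofReal (θ * r ^ 2) + ENNReal.ofReal ((π - θ) * r ^ 2)
          = ENNReal.ofReal (π * r ^ 2) := by
        rw [← ENNReal.ofReal_add (by positivity) (by nlinarith)]
        congr 1
        ring
      exact WithTop.add_right_cancel ENNReal.ofReal_ne_top (hsplit.trans hsum.symm)
open MeasureTheory Real Set

lemma vol3 (θ R : ℝ) (hθ0 : 0 < θ) (hθπ : θ < π) (hR : 0 < R) :
    volume {q : ℝ × ℝ × ℝ | q.1 ^ 2 + (q.2.1 ^ 2 + q.2.2 ^ 2) < R ^ 2 ∧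
        q.2.1 * (Real.cos θ * q.2.1 + Real.sin θ * q.2.2) < 0}
      = ENNReal.ofReal (4 / 3 * θ * R ^ 3) := by
  set T : Set (ℝ × ℝ × ℝ) := {q : ℝ × ℝ × ℝ | q.1 ^ 2 + (q.2.1 ^ 2 + q.2.2 ^ 2) < R ^ 2 ∧
      q.2.1 * (Real.cos θ * q.2.1 + Real.sin θ * q.2.2) < 0} with hT
  have hTopen : IsOpen T := by
    have h1 : IsOpen {q : ℝ × ℝ × ℝ | q.1 ^ 2 + (q.2.1 ^ 2 + q.2.2 ^ 2) < R ^ 2} :=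
      isOpen_lt (by fun_prop) continuous_const
    have h2 : IsOpen {q : ℝ × ℝ × ℝ | q.2.1 * (Real.cos θ * q.2.1 + Real.sin θ * q.2.2) < 0} :=
      isOpen_lt (by fun_prop) continuous_const
    exact h1.inter h2
  rw [MeasureTheory.Measure.volume_eq_prod, Measure.prod_apply hTopen.measurableSet]
  have hslice : ∀ z : ℝ, volume (Prod.mk z ⁻¹' T) = ENNReal.ofReal (θ * (R ^ 2 - z ^ 2)) := by
    intro z
    have hpre : Prod.mk z ⁻¹' T = {p : ℝ × ℝ | p.1 ^ 2 + p.2 ^ 2 < R ^ 2 - z ^ 2 ∧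
        p.1 * (Real.cos θ * p.1 + Real.sin θ * p.2) < 0} := by
      ext p
      simp only [hT, mem_preimage, mem_setOf_eq]
      constructor <;> (rintro ⟨h1, h2⟩; exact ⟨by linarith, h2⟩)
    rw [hpre, sector_area θ hθ0 hθπ]
  have hcongr : ∫⁻ z, volume (Prod.mk z ⁻¹' T)
      = ∫⁻ z, (Icc (-R) R).indicator (fun z => ENNReal.ofReal (θ * (R ^ 2 - z ^ 2))) z := by
    apply lintegral_congr
    intro z
    rw [hslice z, indicator_apply]
    split_ifs with h
    · rfl
    · rw [ENNReal.ofReal_eq_zero]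
      rw [mem_Icc, not_and_or, not_le, not_le] at h
      rcases h with h | h <;>
        exact mul_nonpos_of_nonneg_of_nonpos hθ0.le (by nlinarith)
  rw [hcongr, lintegral_indicator measurableSet_Icc]
  have hint : IntegrableOn (fun z : ℝ => θ * (R ^ 2 - z ^ 2)) (Icc (-R) R) volume :=
    (Continuous.integrableOn_Icc (by fun_prop))
  have hnn : 0 ≤ᵐ[volume.restrict (Icc (-R) R)] fun z : ℝ => θ * (R ^ 2 - z ^ 2) :=
    (ae_restrict_iff' measurableSet_Icc).2 (ae_of_all _ fun z hz => by
      rw [mem_Icc] at hz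
      simp only [Pi.zero_apply]
      exact mul_nonneg hθ0.le (by nlinarith [hz.1, hz.2]))
  rw [← ofReal_integral_eq_lintegral_ofReal hint hnn]
  congr 1
  rw [MeasureTheory.integral_Icc_eq_integral_Ioc, ← intervalIntegral.integral_of_le (by linarith),
    intervalIntegral.integral_const_mul,
    intervalIntegral.integral_sub intervalIntegrable_const (intervalIntegral.intervalIntegrable_pow 2),
    intervalIntegral.integral_const, integral_pow]
  simp only [smul_eq_mul]
  ring
open MeasureTheory Real Set RealInnerProductSpace

lemma ball_vol (R : ℝ) (hR : 0 < R) :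
    volume (Metric.ball (0 : EuclideanSpace ℝ (Fin 3)) R)
      = ENNReal.ofReal (4 / 3 * π * R ^ 3) := by
  have hπ := Real.pi_pos
  have hsπ : (0:ℝ) < Real.sqrt π := Real.sqrt_pos.2 hπ
  have hΓ : Real.Gamma ((3 : ℝ) / 2 + 1) = 3 / 4 * Real.sqrt π := by
    rw [Real.Gamma_add_one (by norm_num)]
    have h32 : (3 : ℝ) / 2 = 1 / 2 + 1 := by norm_num
    rw [h32, Real.Gamma_add_one (by norm_num), Real.Gamma_one_half_eq]
    ring
  rw [EuclideanSpace.volume_ball]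
  simp only [Fintype.card_fin]
  rw [show ((3:ℕ):ℝ) / 2 + 1 = (3:ℝ)/2 + 1 by norm_num, hΓ]
  have hval : Real.sqrt π ^ 3 / (3 / 4 * Real.sqrt π) = 4 / 3 * π := by
    have hsq : Real.sqrt π ^ 2 = π := Real.sq_sqrt hπ.le
    field_simp
    nlinarith [hsq]
  rw [hval, ← ENNReal.ofReal_pow hR.le, ← ENNReal.ofReal_mul (by positivity)]
  congr 1
  ring

/-- Viewpoints at finite distance (Theorem 2): the set of points of the ball of radius
`R` from which an edge with adjacent face normals `a` and `b` is on the transparent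
silhouette has Lebesgue volume `(4/3)·arccos⟨a,b⟩·R³`, i.e. it occupies a fraction
`θ_e/π` of the ball of volume `(4/3)·π·R³`. -/
theorem volume_silhouette_viewpoints_in_ball
    (a b : EuclideanSpace ℝ (Fin 3)) (ha : ‖a‖ = 1) (hb : ‖b‖ = 1)
    (R : ℝ) (hR : 0 < R) :
    volume {x : EuclideanSpace ℝ (Fin 3) | ‖x‖ < R ∧ ⟪x, a⟫ * ⟪x, b⟫ < 0}
      = ENNReal.ofReal ((4 / 3) * Real.arccos ⟪a, b⟫ * R ^ 3) := by
  have hπ := Real.pi_pos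
  have habs : |⟪a, b⟫| ≤ 1 := by
    have := abs_real_inner_le_norm a b
    rwa [ha, hb, one_mul] at this
  have hle1 : ⟪a, b⟫ ≤ 1 := (abs_le.1 habs).2
  have hge1 : (-1 : ℝ) ≤ ⟪a, b⟫ := (abs_le.1 habs).1
  rcases eq_or_lt_of_le hle1 with hc1 | hc1
  · -- ⟪a,b⟫ = 1 : b = a, empty set
    have hba : a = b := (inner_eq_one_iff_of_norm_eq_one ha hb).1 hc1
    have he : {x : EuclideanSpace ℝ (Fin 3) | ‖x‖ < R ∧ ⟪x, a⟫ * ⟪x, b⟫ < 0} = ∅ := by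
      ext x
      simp only [mem_setOf_eq, mem_empty_iff_false, iff_false, not_and]
      intro _
      rw [← hba]
      exact not_lt.2 (mul_self_nonneg _)
    rw [he, measure_empty, hc1, Real.arccos_one]
    norm_num
  rcases eq_or_lt_of_le hge1 with hcm1 | hcm1
  · -- ⟪a,b⟫ = -1 : b = -a, set is ball minus hyperplane
    have hba : a = -b := by
      have h1 : ⟪a, -b⟫ = (1 : ℝ) := by rw [inner_neg_right, ← hcm1]; ring
      exact (inner_eq_one_iff_of_norm_eq_one ha (by rw [norm_neg]; exact hb)).1 h1
    have hbna : b = -a := by rw [hba]; simp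
    have hnull : volume {x : EuclideanSpace ℝ (Fin 3) | ⟪a, x⟫ = 0} = 0 := by
      have hset : {x : EuclideanSpace ℝ (Fin 3) | ⟪a, x⟫ = 0}
          = ((ℝ ∙ a)ᗮ : Submodule ℝ (EuclideanSpace ℝ (Fin 3))) := by
        ext x
        simp only [mem_setOf_eq, SetLike.mem_coe,
          Submodule.mem_orthogonal_singleton_iff_inner_right]
      rw [hset]
      apply Measure.addHaar_submodule
      intro htop
      have hmem : a ∈ ((ℝ ∙ a)ᗮ : Submodule ℝ (EuclideanSpace ℝ (Fin 3))) := by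
        rw [htop]; trivial
      rw [Submodule.mem_orthogonal_singleton_iff_inner_right] at hmem
      rw [real_inner_self_eq_norm_sq, ha] at hmem
      norm_num at hmem
    have hset : {x : EuclideanSpace ℝ (Fin 3) | ‖x‖ < R ∧ ⟪x, a⟫ * ⟪x, b⟫ < 0}
        = Metric.ball (0 : EuclideanSpace ℝ (Fin 3)) R
          \ {x : EuclideanSpace ℝ (Fin 3) | ⟪a, x⟫ = 0} := by
      ext x
      simp only [mem_setOf_eq, mem_diff, mem_ball_zero_iff, hbna, inner_neg_right]
      constructor
      · rintro ⟨h1, h2⟩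
        refine ⟨h1, fun h0 => ?_⟩
        have h0' : ⟪x, a⟫ = (0:ℝ) := by rw [real_inner_comm]; exact h0
        rw [h0'] at h2
        simp at h2
      · rintro ⟨h1, h2⟩
        refine ⟨h1, ?_⟩
        have h0' : ⟪x, a⟫ ≠ (0:ℝ) := fun h0 => h2 (by rw [real_inner_comm]; exact h0)
        have : (0:ℝ) < ⟪x, a⟫ * ⟪x, a⟫ := by
          rcases h0'.lt_or_gt with h | h
          · exact mul_pos_of_neg_of_neg h h
          · exact mul_pos h h
        nlinarith [this]
    rw [hset, measure_diff_null hnull, ball_vol R hR, ← hcm1, Real.arccos_neg_one]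
  · -- main case : -1 < ⟪a,b⟫ < 1
    set c : ℝ := ⟪a, b⟫ with hc
    set θ : ℝ := Real.arccos c with hθ
    have hθ0 : 0 < θ := Real.arccos_pos.2 hc1
    have hθπ : θ < π := by
      rcases lt_or_eq_of_le (Real.arccos_le_pi c) with h | h
      · exact h
      · exfalso
        have := Real.cos_arccos hge1 hle1
        rw [h] at this
        rw [Real.cos_pi] at this
        linarith
    have hcosθ : Real.cos θ = c := Real.cos_arccos hge1 hle1
    set s : ℝ := Real.sqrt (1 - c ^ 2) with hs
    have hc2 : c ^ 2 < 1 := by nlinarith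
    have hs0 : 0 < s := Real.sqrt_pos.2 (by nlinarith)
    have hsinθ : Real.sin θ = s := Real.sin_arccos c
    have hs2 : s ^ 2 = 1 - c ^ 2 := Real.sq_sqrt (by nlinarith)
    -- construct unit vector v orthogonal to a with b = c•a + s•v
    set v : EuclideanSpace ℝ (Fin 3) := s⁻¹ • (b - c • a) with hv
    have haa : ⟪a, a⟫ = (1 : ℝ) := by rw [real_inner_self_eq_norm_sq, ha]; norm_num
    have hbb : ⟪b, b⟫ = (1 : ℝ) := by rw [real_inner_self_eq_norm_sq, hb]; norm_num
    have hba' : ⟪b, a⟫ = c := by rw [real_inner_comm]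
    have hnormbca : ‖b - c • a‖ = s := by
      have hip : ⟪b - c • a, b - c • a⟫ = s ^ 2 := by
        rw [inner_sub_left, inner_sub_right, inner_sub_right, real_inner_smul_left,
          real_inner_smul_left, real_inner_smul_right, real_inner_smul_right,
          haa, hbb, hba', ← hc, hs2]
        ring
      have h2 : ‖b - c • a‖ ^ 2 = s ^ 2 := by
        rw [← real_inner_self_eq_norm_sq, hip]
      calc ‖b - c • a‖ = Real.sqrt (‖b - c • a‖ ^ 2) := (Real.sqrt_sq (norm_nonneg _)).symm
        _ = Real.sqrt (s ^ 2) := by rw [h2]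
        _ = s := Real.sqrt_sq hs0.le
    have hvnorm : ‖v‖ = 1 := by
      rw [hv, norm_smul, hnormbca, norm_inv, Real.norm_eq_abs, abs_of_pos hs0,
        inv_mul_cancel₀ hs0.ne']
    have hav : ⟪a, v⟫ = (0 : ℝ) := by
      rw [hv, real_inner_smul_right, inner_sub_right, real_inner_smul_right, haa, ← hc]
      ring
    have hbdec : b = c • a + s • v := by
      rw [hv, smul_smul, mul_inv_cancel₀ hs0.ne', one_smul]
      abel
    have hvv : ⟪v, v⟫ = (1 : ℝ) := by rw [real_inner_self_eq_norm_sq, hvnorm]; norm_num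
    have hva : ⟪v, a⟫ = (0 : ℝ) := by rw [real_inner_comm]; exact hav
    -- orthonormal basis with B 1 = a, B 2 = v
    have hfam : Orthonormal ℝ (({1, 2} : Set (Fin 3)).restrict ![a, a, v]) := by
      rw [orthonormal_iff_ite]
      rintro ⟨i, hi⟩ ⟨j, hj⟩
      simp only [Set.mem_insert_iff, Set.mem_singleton_iff] at hi hj
      rcases hi with rfl | rfl <;> rcases hj with rfl | rfl <;>
        simp [Set.restrict, Subtype.mk.injEq, ha, hvnorm, haa, hav, hva, hvv,
          show ((1 : Fin 3) ≠ 2) from by decide, show ((2 : Fin 3) ≠ 1) from by decide]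
    obtain ⟨B, hBmem⟩ := hfam.exists_orthonormalBasis_extension_of_card_eq
      (by simp [finrank_euclideanSpace])
    have hB1 : B 1 = a := by simpa using hBmem 1 (by simp)
    have hB2 : B 2 = v := by simpa using hBmem 2 (by simp)
    -- measure preserving transport
    set F : EuclideanSpace ℝ (Fin 3) → ℝ × ℝ × ℝ :=
      fun x => (B.repr x 0, (B.repr x 1, B.repr x 2)) with hF
    have hMP : MeasurePreserving F volume volume := by
      have h1 := B.measurePreserving_repr
      have h2 := EuclideanSpace.volume_preserving_symm_measurableEquiv_toLp (Fin 3)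
      have h3 := MeasureTheory.volume_preserving_piFinSuccAbove (fun _ : Fin 3 => ℝ) 0
      have h4 := (MeasurePreserving.id (volume : Measure ℝ)).prod
        (MeasureTheory.volume_preserving_finTwoArrow ℝ)
      have hcomp := h4.comp (h3.comp (h2.comp h1))
      convert hcomp using 1
      all_goals rfl
    set T : Set (ℝ × ℝ × ℝ) := {q : ℝ × ℝ × ℝ | q.1 ^ 2 + (q.2.1 ^ 2 + q.2.2 ^ 2) < R ^ 2 ∧
        q.2.1 * (Real.cos θ * q.2.1 + Real.sin θ * q.2.2) < 0} with hT
    have hTopen : IsOpen T := by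
      have ho1 : IsOpen {q : ℝ × ℝ × ℝ | q.1 ^ 2 + (q.2.1 ^ 2 + q.2.2 ^ 2) < R ^ 2} :=
        isOpen_lt (by fun_prop) continuous_const
      have ho2 : IsOpen {q : ℝ × ℝ × ℝ |
          q.2.1 * (Real.cos θ * q.2.1 + Real.sin θ * q.2.2) < 0} :=
        isOpen_lt (by fun_prop) continuous_const
      exact ho1.inter ho2
    have hpre : {x : EuclideanSpace ℝ (Fin 3) | ‖x‖ < R ∧ ⟪x, a⟫ * ⟪x, b⟫ < 0} = F ⁻¹' T := by
      ext x
      have hxa : ⟪x, a⟫ = B.repr x 1 := by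
        rw [B.repr_apply_apply, hB1, real_inner_comm]
      have hxv : ⟪x, v⟫ = B.repr x 2 := by
        rw [B.repr_apply_apply, hB2, real_inner_comm]
      have hxb : ⟪x, b⟫ = c * B.repr x 1 + s * B.repr x 2 := by
        rw [hbdec, inner_add_right, real_inner_smul_right, real_inner_smul_right, hxa, hxv]
      have hnorm : ‖x‖ < R ↔
          (B.repr x 0) ^ 2 + ((B.repr x 1) ^ 2 + (B.repr x 2) ^ 2) < R ^ 2 := by
        rw [← B.repr.norm_map x, EuclideanSpace.norm_eq, Real.sqrt_lt' hR,
          Fin.sum_univ_three]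
        simp only [Real.norm_eq_abs, sq_abs]
        constructor <;> intro h <;> linarith
      simp only [mem_setOf_eq, mem_preimage, hT, hF]
      rw [hxa, hxb, hnorm, hcosθ, hsinθ]
    rw [hpre, hMP.measure_preimage hTopen.measurableSet.nullMeasurableSet,
      vol3 θ R hθ0 hθπ hR]
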